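/- Suppose a probability measure μ on ℝ satisfies: for all absolutely continuous g ∈ L_p(μ), h ∈ L_q(μ) with 1/p + 1/q = 1, |Cov_μ(g,h)| ≤ c_p ‖g'‖_p ‖h − E[h]‖_q, for some constant c_p > 0. Then if X has law μ, ‖X − E[X]‖_p ≤ 2 c_p. -/

import Mathlib

open MeasureTheory Set ENNReal Filter

noncomputable def psiAux (p ε t : ℝ) : ℝ := t * (t ^ 2 + ε) ^ ((p - 2) / 2)

noncomputable def psiAuxDeriv (p ε t : ℝ) : ℝ :=
  (t ^ 2 + ε) ^ ((p - 2) / 2) +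
    t * ((p - 2) / 2 * (t ^ 2 + ε) ^ ((p - 2) / 2 - 1) * (2 * t))

lemma psiAux_hasDerivAt (p : ℝ) {ε : ℝ} (hε : 0 < ε) (t : ℝ) :
    HasDerivAt (psiAux p ε) (psiAuxDeriv p ε t) t := by
  have h1 : HasDerivAt (fun t : ℝ => t ^ 2 + ε) (2 * t) t := by
    simpa using (hasDerivAt_pow 2 t).add_const ε
  have hne : t ^ 2 + ε ≠ 0 := by positivity
  have h2 : HasDerivAt (fun y : ℝ => y ^ ((p - 2) / 2))
      ((p - 2) / 2 * (t ^ 2 + ε) ^ ((p - 2) / 2 - 1)) (t ^ 2 + ε) :=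
    Real.hasDerivAt_rpow_const (Or.inl hne)
  have h3 : HasDerivAt (fun t : ℝ => (t ^ 2 + ε) ^ ((p - 2) / 2))
      ((p - 2) / 2 * (t ^ 2 + ε) ^ ((p - 2) / 2 - 1) * (2 * t)) t := by
    have h4 := h2.comp t h1; exact h4
  have h4 := (hasDerivAt_id' t).mul h3; rw [one_mul] at h4; exact h4

lemma psiAux_abs_le (p : ℝ) (hp : 1 ≤ p) {ε : ℝ} (hε : 0 < ε) (hε1 : ε ≤ 1) (t : ℝ) :
    |psiAux p ε t| ≤ (|t| + 1) ^ (p - 1) := by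
  have hpos : (0:ℝ) < t ^ 2 + ε := by positivity
  have h1 : |psiAux p ε t| = |t| * (t ^ 2 + ε) ^ ((p - 2) / 2) := by
    rw [psiAux, abs_mul, abs_of_nonneg (Real.rpow_nonneg hpos.le _)]
  have h2 : |t| ≤ (t ^ 2 + ε) ^ ((1:ℝ) / 2) := by
    calc |t| = Real.sqrt (t ^ 2) := (Real.sqrt_sq_eq_abs t).symm
      _ = (t ^ 2) ^ ((1:ℝ) / 2) := Real.sqrt_eq_rpow _
      _ ≤ (t ^ 2 + ε) ^ ((1:ℝ) / 2) :=
        Real.rpow_le_rpow (by positivity) (by linarith) (by norm_num)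
  have h3 : |psiAux p ε t| ≤ (t ^ 2 + ε) ^ ((p - 1) / 2) := by
    rw [h1]
    calc |t| * (t ^ 2 + ε) ^ ((p - 2) / 2)
        ≤ (t ^ 2 + ε) ^ ((1:ℝ) / 2) * (t ^ 2 + ε) ^ ((p - 2) / 2) :=
          mul_le_mul_of_nonneg_right h2 (Real.rpow_nonneg hpos.le _)
      _ = (t ^ 2 + ε) ^ ((p - 1) / 2) := by
          rw [← Real.rpow_add hpos]; ring_nf
  refine h3.trans ?_
  have h4 : t ^ 2 + ε ≤ (|t| + 1) ^ 2 := by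
    have := abs_nonneg t
    nlinarith [sq_abs t]
  calc (t ^ 2 + ε) ^ ((p - 1) / 2) ≤ ((|t| + 1) ^ 2) ^ ((p - 1) / 2) :=
        Real.rpow_le_rpow hpos.le h4 (by linarith)
    _ = (|t| + 1) ^ (p - 1) := by
        rw [← Real.rpow_natCast (|t| + 1) 2, ← Real.rpow_mul (by positivity)]
        norm_num
        ring_nf

lemma psiAux_abs_eq (p : ℝ) {ε : ℝ} (hε : 0 < ε) (t : ℝ) :
    |psiAux p ε t| = |t| * (t ^ 2 + ε) ^ ((p - 2) / 2) := by
  have hpos : (0:ℝ) < t ^ 2 + ε := by positivity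
  rw [psiAux, abs_mul, abs_of_nonneg (Real.rpow_nonneg hpos.le _)]

lemma tendsto_rpow_core (t r : ℝ) (ht : t ≠ 0) :
    Filter.Tendsto (fun ε : ℝ => (t ^ 2 + ε) ^ r) (nhdsWithin 0 (Set.Ioi 0))
      (nhds ((t ^ 2) ^ r)) := by
  have h1 : Filter.Tendsto (fun ε : ℝ => t ^ 2 + ε) (nhdsWithin 0 (Set.Ioi 0))
      (nhds (t ^ 2)) := by
    have h0 : Continuous (fun ε : ℝ => t ^ 2 + ε) := continuous_const.add continuous_id
    simpa using (h0.tendsto (0:ℝ)).mono_left nhdsWithin_le_nhds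
  exact (Real.continuousAt_rpow_const (t ^ 2) r
    (Or.inl (pow_ne_zero 2 ht))).tendsto.comp h1

lemma sq_rpow_abs (p t : ℝ) (ht : t ≠ 0) :
    (t ^ 2 : ℝ) ^ ((p - 2) / 2) = |t| ^ (p - 2) := by
  rw [← sq_abs, ← Real.rpow_natCast |t| 2, ← Real.rpow_mul (abs_nonneg t)]
  ring_nf

lemma tendsto_mul_psiAux (p : ℝ) (hp : 1 < p) (t : ℝ) :
    Filter.Tendsto (fun ε : ℝ => t * psiAux p ε t) (nhdsWithin 0 (Set.Ioi 0))
      (nhds (|t| ^ p)) := by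
  rcases eq_or_ne t 0 with rfl | ht
  · simp only [psiAux, zero_mul, mul_zero]
    rw [abs_zero, Real.zero_rpow (by positivity)]
    exact tendsto_const_nhds
  · have habs : 0 < |t| := abs_pos.mpr ht
    have h2 : t * (t * (t ^ 2) ^ ((p - 2) / 2)) = |t| ^ p := by
      rw [sq_rpow_abs p t ht, ← mul_assoc, ← sq, ← sq_abs,
        ← Real.rpow_natCast |t| 2, ← Real.rpow_add habs]
      norm_num
    have := ((tendsto_rpow_core t ((p - 2) / 2) ht).const_mul t).const_mul t
    rw [h2] at this
    simpa [psiAux, mul_assoc] using this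

lemma tendsto_abs_psiAux_rpow (p q : ℝ) (hp : 1 < p) (hq : 0 < q)
    (hpq : (p - 1) * q = p) (t : ℝ) :
    Filter.Tendsto (fun ε : ℝ => |psiAux p ε t| ^ q) (nhdsWithin 0 (Set.Ioi 0))
      (nhds (|t| ^ p)) := by
  rcases eq_or_ne t 0 with rfl | ht
  · simp only [psiAux, zero_mul, abs_zero]
    rw [Real.zero_rpow hq.ne', Real.zero_rpow (by positivity)]
    exact tendsto_const_nhds
  · have habs : 0 < |t| := abs_pos.mpr ht
    have h1 : Filter.Tendsto (fun ε : ℝ => |psiAux p ε t|) (nhdsWithin 0 (Set.Ioi 0))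
        (nhds (|t| ^ (p - 1))) := by
      have := (tendsto_rpow_core t ((p - 2) / 2) ht).const_mul |t|
      have h2 : |t| * (t ^ 2) ^ ((p - 2) / 2) = |t| ^ (p - 1) := by
        rw [sq_rpow_abs p t ht]
        nth_rewrite 1 [← Real.rpow_one |t|]
        rw [← Real.rpow_add habs]
        ring_nf
      rw [h2] at this
      refine this.congr' ?_
      filter_upwards [self_mem_nhdsWithin] with ε hε
      exact (psiAux_abs_eq p hε t).symm
    have h3 : (|t| ^ (p - 1)) ^ q = |t| ^ p := by
      rw [← Real.rpow_mul (abs_nonneg t), hpq]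
    have := (Real.continuousAt_rpow_const (|t| ^ (p - 1)) q
      (Or.inr hq.le)).tendsto.comp h1
    rw [h3] at this
    exact this

/-- Moment bound from a `(p,q)` covariance inequality: if a probability measure `μ`
on `ℝ` satisfies `|Cov(g,h)| ≤ c_p ‖g'‖_p ‖h − E h‖_q` for all absolutely continuous
`g ∈ L_p(μ)`, `h ∈ L_q(μ)` (with `1/p + 1/q = 1`), then a random variable `X` with
law `μ` satisfies `‖X − E X‖_p ≤ 2 c_p`. -/
theorem moment_bound_from_cov (μ : Measure ℝ) [IsProbabilityMeasure μ]
    (p q : ℝ) (hp : 1 ≤ p) (hq : 1 ≤ q) (hpq : 1 / p + 1 / q = 1)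
    (c : ℝ) (hc : 0 < c)
    (hcov : ∀ g h g' h' : ℝ → ℝ, (∀ x, HasDerivAt g (g' x) x) →
      (∀ x, HasDerivAt h (h' x) x) →
      MemLp g (ENNReal.ofReal p) μ → MemLp h (ENNReal.ofReal q) μ →
      ENNReal.ofReal |∫ x, g x * (h x - ∫ y, h y ∂μ) ∂μ|
        ≤ ENNReal.ofReal c * eLpNorm g' (ENNReal.ofReal p) μ *
            eLpNorm (fun x => h x - ∫ y, h y ∂μ) (ENNReal.ofReal q) μ)
    (hX : MemLp (fun x : ℝ => x) (ENNReal.ofReal p) μ) :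
    eLpNorm (fun x : ℝ => x - ∫ y, y ∂μ) (ENNReal.ofReal p) μ
      ≤ ENNReal.ofReal (2 * c) := by
  have hp0 : (0:ℝ) < p := lt_of_lt_of_le one_pos hp
  have hq0 : (0:ℝ) < q := lt_of_lt_of_le one_pos hq
  have hp1 : 1 < p := by
    have h1 : 1 / p < 1 := by
      have : 0 < 1 / q := by positivity
      linarith
    exact (div_lt_one hp0).mp h1
  have hq1 : 1 < q := by
    have h1 : 1 / q < 1 := by
      have : 0 < 1 / p := by positivity
      linarith
    exact (div_lt_one hq0).mp h1
  have hpqmul : (p - 1) * q = p := by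
    field_simp at hpq
    nlinarith [hpq]
  set m := ∫ y, y ∂μ with hm
  set f : ℝ → ℝ := fun x => x - m with hfdef
  set P := ENNReal.ofReal p with hPdef
  set Q := ENNReal.ofReal q with hQdef
  have hP0 : P ≠ 0 := (ENNReal.ofReal_pos.mpr hp0).ne'
  have hQ0 : Q ≠ 0 := (ENNReal.ofReal_pos.mpr hq0).ne'
  have hPtop : P ≠ ∞ := ENNReal.ofReal_ne_top
  have hQtop : Q ≠ ∞ := ENNReal.ofReal_ne_top
  have hPto : P.toReal = p := ENNReal.toReal_ofReal hp0.le
  have hQto : Q.toReal = q := ENNReal.toReal_ofReal hq0.le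
  have hP1 : 1 ≤ P := by
    rw [hPdef, ← ENNReal.ofReal_one]; exact ENNReal.ofReal_le_ofReal hp
  have hQ1 : 1 ≤ Q := by
    rw [hQdef, ← ENNReal.ofReal_one]; exact ENNReal.ofReal_le_ofReal hq
  have hPQ : 1 / (1:ℝ≥0∞) = 1 / Q + 1 / P := by
    simp only [one_div, hPdef, hQdef]
    rw [← ENNReal.ofReal_inv_of_pos hq0, ← ENNReal.ofReal_inv_of_pos hp0,
      ← ENNReal.ofReal_add (by positivity) (by positivity)]
    have : q⁻¹ + p⁻¹ = 1 := by
      rw [add_comm]; simpa [one_div] using hpq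
    rw [this, ENNReal.ofReal_one, inv_one]
  have hfmem : MemLp f P μ := hX.sub (memLp_const m)
  have habs1 : MemLp (fun x => |f x| + 1) P μ := by
    have h1 : MemLp (fun x => ‖f x‖) P μ := hfmem.norm
    have h2 := h1.add (memLp_const (1:ℝ)); simp only [Real.norm_eq_abs] at h2; exact h2
  have hBint : Integrable (fun x => (|f x| + 1) ^ p) μ := by
    have h1 := habs1.integrable_norm_rpow hP0 hPtop
    rw [hPto] at h1
    have h2 : (fun x => ‖|f x| + 1‖ ^ p) = fun x => (|f x| + 1) ^ p :=
      funext fun x => by rw [Real.norm_of_nonneg (by positivity)]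
    rwa [h2] at h1
  have hGq : MemLp (fun x => (|f x| + 1) ^ (p - 1)) Q μ := by
    have h1 := habs1.norm_rpow_div (ENNReal.ofReal (p - 1))
    have h2 : (ENNReal.ofReal (p - 1)).toReal = p - 1 :=
      ENNReal.toReal_ofReal (by linarith)
    have h3 : P / ENNReal.ofReal (p - 1) = Q := by
      rw [hPdef, hQdef, ← ENNReal.ofReal_div_of_pos (by linarith)]
      congr 1
      rw [div_eq_iff (by linarith : p - 1 ≠ 0)]
      linarith [hpqmul]
    rw [h2, h3] at h1
    have h4 : (fun x => ‖|f x| + 1‖ ^ (p - 1)) = fun x => (|f x| + 1) ^ (p - 1) :=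
      funext fun x => by rw [Real.norm_of_nonneg (by positivity)]
    rwa [h4] at h1
  set A := ∫ x, |f x| ^ p ∂μ with hA
  have hA0 : 0 ≤ A := integral_nonneg fun x => Real.rpow_nonneg (abs_nonneg _) _
  have hcont : ∀ ε : ℝ, 0 < ε → Continuous (fun x => psiAux p ε (f x)) := by
    intro ε hε
    have h1 : Continuous (psiAux p ε) :=
      continuous_iff_continuousAt.mpr fun t => (psiAux_hasDerivAt p hε t).continuousAt
    exact h1.comp (continuous_id.sub continuous_const)
  -- uniform bound facts
  have hbound1 : ∀ ε : ℝ, ε ∈ Set.Ioc (0:ℝ) 1 → ∀ x,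
      ‖f x * psiAux p ε (f x)‖ ≤ (|f x| + 1) ^ p := by
    intro ε hε x
    rw [Real.norm_eq_abs, abs_mul]
    have h1 := psiAux_abs_le p hp hε.1 hε.2 (f x)
    have h2 : |f x| * |psiAux p ε (f x)| ≤ (|f x| + 1) * (|f x| + 1) ^ (p - 1) :=
      mul_le_mul (by linarith [abs_nonneg (f x)]) h1 (abs_nonneg _) (by positivity)
    refine h2.trans (le_of_eq ?_)
    rw [← Real.rpow_one_add' (by positivity) (by linarith)]
    ring_nf
  have hbound2 : ∀ ε : ℝ, ε ∈ Set.Ioc (0:ℝ) 1 → ∀ x,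
      ‖|psiAux p ε (f x)| ^ q‖ ≤ (|f x| + 1) ^ p := by
    intro ε hε x
    rw [Real.norm_of_nonneg (Real.rpow_nonneg (abs_nonneg _) _)]
    have h1 := Real.rpow_le_rpow (abs_nonneg _) (psiAux_abs_le p hp hε.1 hε.2 (f x)) hq0.le
    refine h1.trans (le_of_eq ?_)
    rw [← Real.rpow_mul (by positivity : (0:ℝ) ≤ |f x| + 1), hpqmul]
  -- key per-ε inequality
  have key : ∀ ε : ℝ, ε ∈ Set.Ioc (0:ℝ) 1 →
      ∫ x, f x * psiAux p ε (f x) ∂μ ≤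
        2 * c * (∫ x, |psiAux p ε (f x)| ^ q ∂μ) ^ (1 / q) := by
    intro ε hε
    set hfun : ℝ → ℝ := fun x => psiAux p ε (f x) with hfun_def
    have hd : ∀ x, HasDerivAt hfun (psiAuxDeriv p ε (f x)) x := by
      intro x
      have h1 := psiAux_hasDerivAt p hε.1 (f x)
      have h2 : HasDerivAt f 1 x := (hasDerivAt_id x).sub_const m
      have h3 := h1.comp x h2; rw [mul_one] at h3; exact h3
    have hmQ : MemLp hfun Q μ := by
      refine hGq.of_le ((hcont ε hε.1).aestronglyMeasurable) (ae_of_all _ fun x => ?_)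
      rw [Real.norm_eq_abs, Real.norm_of_nonneg (by positivity)]
      exact psiAux_abs_le p hp hε.1 hε.2 (f x)
    have happ := hcov (fun x => x) hfun (fun _ => 1) (fun x => psiAuxDeriv p ε (f x))
      (fun x => hasDerivAt_id x) hd hX hmQ
    set I := ∫ y, hfun y ∂μ with hI
    set B := ∫ x, |hfun x| ^ q ∂μ with hB
    have hB0 : 0 ≤ B := integral_nonneg fun x => Real.rpow_nonneg (abs_nonneg _) _
    -- eLpNorm of constant 1
    have hone : eLpNorm (fun _ : ℝ => (1:ℝ)) P μ = 1 := by
      rw [eLpNorm_const (1:ℝ) hP0 (IsProbabilityMeasure.ne_zero μ)]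
      simp
    -- eLpNorm hfun in terms of B
    have heLp : eLpNorm hfun Q μ = ENNReal.ofReal (B ^ (1 / q)) := by
      rw [hmQ.eLpNorm_eq_integral_rpow_norm hQ0 hQtop, hQto]
      have hBnorm : (∫ x, ‖hfun x‖ ^ q ∂μ) = B :=
        integral_congr_ae (ae_of_all _ fun x => by simp [Real.norm_eq_abs])
      rw [hBnorm, one_div]
    -- |I| bounded by eLpNorm
    have hEbound : ENNReal.ofReal |I| ≤ eLpNorm hfun Q μ := by
      have hm1 : MemLp hfun 1 μ := hmQ.mono_exponent hQ1
      have h1 : |I| ≤ ∫ x, ‖hfun x‖ ∂μ := by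
        simpa [Real.norm_eq_abs] using norm_integral_le_integral_norm (μ := μ) hfun
      calc ENNReal.ofReal |I| ≤ ENNReal.ofReal (∫ x, ‖hfun x‖ ∂μ) :=
            ENNReal.ofReal_le_ofReal h1
        _ = eLpNorm hfun 1 μ := by
            rw [hm1.eLpNorm_eq_integral_rpow_norm one_ne_zero ENNReal.one_ne_top]
            simp
        _ ≤ eLpNorm hfun Q μ :=
            eLpNorm_le_eLpNorm_of_exponent_le hQ1 hmQ.aestronglyMeasurable
    -- Minkowski-type bound
    have hsub : eLpNorm (fun x => hfun x - I) Q μ ≤ 2 * eLpNorm hfun Q μ := by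
      have h0 : (fun x => hfun x - I) = hfun - fun _ => I := rfl
      have h1 : eLpNorm (hfun - fun _ => I) Q μ ≤
          eLpNorm hfun Q μ + eLpNorm (fun _ : ℝ => I) Q μ :=
        eLpNorm_sub_le (f := hfun) (g := fun _ => I) hmQ.aestronglyMeasurable
          aestronglyMeasurable_const hQ1
      have h2 : eLpNorm (fun _ : ℝ => I) Q μ = ENNReal.ofReal |I| := by
        rw [eLpNorm_const I hQ0 (IsProbabilityMeasure.ne_zero μ)]
        simp [← Real.enorm_eq_ofReal_abs]
      rw [h0]
      calc eLpNorm (hfun - fun _ => I) Q μ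
          ≤ eLpNorm hfun Q μ + eLpNorm (fun _ : ℝ => I) Q μ := h1
        _ ≤ eLpNorm hfun Q μ + eLpNorm hfun Q μ := by
            rw [h2]; exact add_le_add le_rfl hEbound
        _ = 2 * eLpNorm hfun Q μ := (two_mul _).symm
    -- integrability facts
    have hIhfun : Integrable hfun μ := hmQ.integrable hQ1
    have hIid : Integrable (fun x : ℝ => x) μ := hX.integrable hP1
    have hIprod : Integrable (fun x => hfun x * x) μ := by
      have h1 : MemLp (hfun • fun x : ℝ => x) 1 μ := hX.smul hmQ (hpqr := ⟨by simpa [one_div] using hPQ.symm⟩)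
      rw [memLp_one_iff_integrable] at h1
      exact h1
    -- rewrite the covariance integral
    have hstep : ∫ x, x * (hfun x - I) ∂μ = ∫ x, f x * hfun x ∂μ := by
      have e1 : (fun x : ℝ => x * (hfun x - I)) = fun x => hfun x * x - x * I := by
        funext x; ring
      have e2 : (fun x => f x * hfun x) = fun x => hfun x * x - m * hfun x := by
        funext x; simp only [hfdef]; ring
      rw [e1, e2, integral_sub hIprod (hIid.mul_const I),
        integral_sub hIprod (hIhfun.const_mul m), integral_mul_const,
        integral_const_mul, ← hm, ← hI]
    -- assemble the ENNReal inequality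
    have hchain : ENNReal.ofReal |∫ x, x * (hfun x - I) ∂μ| ≤
        ENNReal.ofReal (2 * c * B ^ (1 / q)) := by
      refine le_trans (le_of_eq ?_) (happ.trans ?_)
      · norm_num
      rw [hone, mul_one]
      calc ENNReal.ofReal c * eLpNorm (fun x => hfun x - I) Q μ
          ≤ ENNReal.ofReal c * (2 * eLpNorm hfun Q μ) := mul_le_mul_right hsub _
        _ = ENNReal.ofReal (2 * c * B ^ (1 / q)) := by
            rw [heLp, ← ENNReal.ofReal_ofNat 2, ← ENNReal.ofReal_mul (by norm_num),
              ← ENNReal.ofReal_mul hc.le]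
            congr 1
            ring
    have h5 : (0:ℝ) ≤ 2 * c * B ^ (1 / q) := by positivity
    have h6 := (ENNReal.ofReal_le_ofReal_iff h5).mp hchain
    rw [hstep] at h6
    exact (le_abs_self _).trans h6
  -- dominated convergence
  have hIoc : Set.Ioc (0:ℝ) 1 ∈ nhdsWithin (0:ℝ) (Set.Ioi 0) :=
    Ioc_mem_nhdsGT_of_mem ⟨le_refl 0, one_pos⟩
  have htendA : Filter.Tendsto (fun ε => ∫ x, f x * psiAux p ε (f x) ∂μ)
      (nhdsWithin 0 (Set.Ioi 0)) (nhds A) := by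
    refine tendsto_integral_filter_of_dominated_convergence
      (fun x => (|f x| + 1) ^ p) ?_ ?_ hBint ?_
    · filter_upwards [self_mem_nhdsWithin] with ε hε
      exact ((continuous_id.sub continuous_const).mul (hcont ε hε)).aestronglyMeasurable
    · filter_upwards [hIoc] with ε hε
      exact ae_of_all _ fun x => hbound1 ε hε x
    · exact ae_of_all _ fun x => tendsto_mul_psiAux p hp1 (f x)
  have htendB : Filter.Tendsto (fun ε => ∫ x, |psiAux p ε (f x)| ^ q ∂μ)
      (nhdsWithin 0 (Set.Ioi 0)) (nhds A) := by
    refine tendsto_integral_filter_of_dominated_convergence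
      (fun x => (|f x| + 1) ^ p) ?_ ?_ hBint ?_
    · filter_upwards [self_mem_nhdsWithin] with ε hε
      exact (((hcont ε hε).abs).rpow_const (fun x => Or.inr hq0.le)).aestronglyMeasurable
    · filter_upwards [hIoc] with ε hε
      exact ae_of_all _ fun x => hbound2 ε hε x
    · exact ae_of_all _ fun x => tendsto_abs_psiAux_rpow p q hp1 hq0 hpqmul (f x)
  have htendR : Filter.Tendsto (fun ε => 2 * c * (∫ x, |psiAux p ε (f x)| ^ q ∂μ) ^ (1 / q))
      (nhdsWithin 0 (Set.Ioi 0)) (nhds (2 * c * A ^ (1 / q))) := by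
    have h1 := (Real.continuousAt_rpow_const A (1 / q) (Or.inr (by positivity))).tendsto.comp htendB
    exact h1.const_mul (2 * c)
  have hineq : A ≤ 2 * c * A ^ (1 / q) := by
    refine le_of_tendsto_of_tendsto htendA htendR ?_
    filter_upwards [hIoc] with ε hε
    exact key ε hε
  -- conclude
  have hfinal : A ^ (1 / p) ≤ 2 * c := by
    rcases eq_or_lt_of_le hA0 with h | hApos
    · rw [← h, Real.zero_rpow (by positivity)]
      positivity
    · have hAq : 0 < A ^ (1 / q) := Real.rpow_pos_of_pos hApos _
      have hsplit : A ^ (1 / p) * A ^ (1 / q) = A := by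
        rw [← Real.rpow_add hApos, hpq, Real.rpow_one]
      have h2 : A ^ (1 / p) * A ^ (1 / q) ≤ 2 * c * A ^ (1 / q) := by
        rw [hsplit]; exact hineq
      exact le_of_mul_le_mul_right h2 hAq
  rw [hfmem.eLpNorm_eq_integral_rpow_norm hP0 hPtop, hPto]
  refine ENNReal.ofReal_le_ofReal ?_
  have hnorm : (∫ x, ‖f x‖ ^ p ∂μ) = A :=
    integral_congr_ae (ae_of_all _ fun x => by simp [Real.norm_eq_abs])
  rw [hnorm, ← one_div]
  exact hfinal
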